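/- Let V₁ and V₂ be commuting isometries on a complex Hilbert space H. Then, in the Hilbert space direct sum H ⊕ H, the closure of the set { (D_{V₁*}V₂*h, D_{V₂*}h) : h ∈ H } equals 𝒟_{V₁*} ⊕ 𝒟_{V₂*}, and likewise the closure of { (D_{V₁*}h, D_{V₂*}V₁*h) : h ∈ H } equals 𝒟_{V₁*} ⊕ 𝒟_{V₂*}. -/

import Mathlib

open ContinuousLinearMap

/-- The Hilbert space direct sum `H ⊕ H`, realized as `WithLp 2 (H × H)`. -/
noncomputable abbrev HilbertProd (H : Type*) : Type _ := WithLp 2 (H × H)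

/-- The element `(x, y)` of the Hilbert space direct sum `H ⊕ H`. -/
noncomputable abbrev pairL2 {H : Type*} (x y : H) : HilbertProd H :=
  (WithLp.equiv 2 (H × H)).symm (x, y)

/-- A positive operator whose square is `1 - V (adjoint V)` for an isometry `V`
annihilates the range of `V`. -/
lemma defect_mul_isometry_eq_zero {H : Type*} [NormedAddCommGroup H]
    [InnerProductSpace ℂ H] [CompleteSpace H] (V D : H →L[ℂ] H)
    (hV : adjoint V * V = 1) (hpos : D.IsPositive)
    (hsq : D * D = 1 - V * adjoint V) : D * V = 0 := by
  have hDDV : D * (D * V) = 0 := by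
    rw [← mul_assoc, hsq, sub_mul, one_mul, mul_assoc, hV, mul_one, sub_self]
  ext x
  have hsa : adjoint D = D := hpos.isSelfAdjoint
  have h0 : D (D (V x)) = 0 := by
    have := congrArg (fun T : H →L[ℂ] H => T x) hDDV
    simpa [mul_apply] using this
  have : (inner ℂ (D (V x)) (D (V x)) : ℂ) = 0 := by
    rw [← adjoint_inner_right, hsa, h0, inner_zero_right]
  have := inner_self_eq_zero.mp this
  simpa using this

/-- Topological part: closure of the image of a product of ranges under the `WithLp` equiv. -/
lemma closure_symm_image_prod {H : Type*} [NormedAddCommGroup H]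
    [InnerProductSpace ℂ H] (D₁ D₂ : H →L[ℂ] H) :
    closure ((WithLp.equiv 2 (H × H)).symm '' (Set.range D₁ ×ˢ Set.range D₂)) =
      {x : HilbertProd H | (WithLp.equiv 2 (H × H) x).1 ∈ closure (Set.range D₁) ∧
        (WithLp.equiv 2 (H × H) x).2 ∈ closure (Set.range D₂)} := by
  have h1 : (WithLp.equiv 2 (H × H)).symm '' (Set.range D₁ ×ˢ Set.range D₂)
      = (WithLp.prodContinuousLinearEquiv 2 ℂ H H).toHomeomorph ⁻¹'
          (Set.range D₁ ×ˢ Set.range D₂) := by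
    ext x
    constructor
    · rintro ⟨p, hp, rfl⟩
      exact hp
    · intro hx
      exact ⟨WithLp.equiv 2 (H × H) x, hx, rfl⟩
  rw [h1, ← Homeomorph.preimage_closure, closure_prod_eq]
  rfl

theorem defect_range_of_commuting_isometries {H : Type*} [NormedAddCommGroup H]
    [InnerProductSpace ℂ H] [CompleteSpace H] (V₁ V₂ D₁ D₂ : H →L[ℂ] H)
    (hV₁ : adjoint V₁ * V₁ = 1) (hV₂ : adjoint V₂ * V₂ = 1) (hcomm : V₁ * V₂ = V₂ * V₁)
    (hD₁pos : D₁.IsPositive) (hD₁sq : D₁ * D₁ = 1 - V₁ * adjoint V₁)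
    (hD₂pos : D₂.IsPositive) (hD₂sq : D₂ * D₂ = 1 - V₂ * adjoint V₂) :
    closure {x : HilbertProd H | ∃ h : H, x = pairL2 (D₁ (adjoint V₂ h)) (D₂ h)} =
      {x : HilbertProd H | (WithLp.equiv 2 (H × H) x).1 ∈ closure (Set.range D₁) ∧
        (WithLp.equiv 2 (H × H) x).2 ∈ closure (Set.range D₂)} ∧
    closure {x : HilbertProd H | ∃ h : H, x = pairL2 (D₁ h) (D₂ (adjoint V₁ h))} =
      {x : HilbertProd H | (WithLp.equiv 2 (H × H) x).1 ∈ closure (Set.range D₁) ∧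
        (WithLp.equiv 2 (H × H) x).2 ∈ closure (Set.range D₂)} := by
  have hD₁V : D₁ * V₁ = 0 := defect_mul_isometry_eq_zero V₁ D₁ hV₁ hD₁pos hD₁sq
  have hD₂V : D₂ * V₂ = 0 := defect_mul_isometry_eq_zero V₂ D₂ hV₂ hD₂pos hD₂sq
  have hVV₁ : ∀ y, adjoint V₁ (V₁ y) = y := fun y => by
    have := congrArg (fun T : H →L[ℂ] H => T y) hV₁; simpa [mul_apply] using this
  have hVV₂ : ∀ y, adjoint V₂ (V₂ y) = y := fun y => by
    have := congrArg (fun T : H →L[ℂ] H => T y) hV₂; simpa [mul_apply] using this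
  have hDV₁ : ∀ y, D₁ (V₁ y) = 0 := fun y => by
    have := congrArg (fun T : H →L[ℂ] H => T y) hD₁V; simpa [mul_apply] using this
  have hDV₂ : ∀ y, D₂ (V₂ y) = 0 := fun y => by
    have := congrArg (fun T : H →L[ℂ] H => T y) hD₂V; simpa [mul_apply] using this
  have hS1 : {x : HilbertProd H | ∃ h : H, x = pairL2 (D₁ (adjoint V₂ h)) (D₂ h)}
      = (WithLp.equiv 2 (H × H)).symm '' (Set.range D₁ ×ˢ Set.range D₂) := by
    ext x
    simp only [Set.mem_setOf_eq, Set.mem_image, Set.mem_prod, Set.mem_range, Prod.exists]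
    constructor
    · rintro ⟨h, rfl⟩
      exact ⟨_, _, ⟨⟨_, rfl⟩, ⟨_, rfl⟩⟩, rfl⟩
    · rintro ⟨u, v, ⟨⟨a, rfl⟩, ⟨c, rfl⟩⟩, rfl⟩
      refine ⟨c - V₂ (adjoint V₂ c) + V₂ a, ?_⟩
      have h1 : adjoint V₂ (c - V₂ (adjoint V₂ c) + V₂ a) = a := by
        simp [map_sub, map_add, hVV₂]
      have h2 : D₂ (c - V₂ (adjoint V₂ c) + V₂ a) = D₂ c := by
        simp [map_sub, map_add, hDV₂]
      rw [h1, h2]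
  have hS2 : {x : HilbertProd H | ∃ h : H, x = pairL2 (D₁ h) (D₂ (adjoint V₁ h))}
      = (WithLp.equiv 2 (H × H)).symm '' (Set.range D₁ ×ˢ Set.range D₂) := by
    ext x
    simp only [Set.mem_setOf_eq, Set.mem_image, Set.mem_prod, Set.mem_range, Prod.exists]
    constructor
    · rintro ⟨h, rfl⟩
      exact ⟨_, _, ⟨⟨_, rfl⟩, ⟨_, rfl⟩⟩, rfl⟩
    · rintro ⟨u, v, ⟨⟨a, rfl⟩, ⟨c, rfl⟩⟩, rfl⟩
      refine ⟨a - V₁ (adjoint V₁ a) + V₁ c, ?_⟩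
      have h1 : adjoint V₁ (a - V₁ (adjoint V₁ a) + V₁ c) = c := by
        simp [map_sub, map_add, hVV₁]
      have h2 : D₁ (a - V₁ (adjoint V₁ a) + V₁ c) = D₁ a := by
        simp [map_sub, map_add, hDV₁]
      rw [h1, h2]
  rw [hS1, hS2, closure_symm_image_prod]
  exact ⟨rfl, rfl⟩
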